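/- Let Δ be a finite simple graph with vertex set V, let v ∈ V, and let link(v) be the set of neighbors of v in Δ. Let k ≥ 1, let ε_1,…,ε_k ∈ {+1,−1}, and let g_0, g_1, …, g_k be elements of the subgroup of G(Δ) generated by the generators corresponding to V ∖ {v}. If g_0 v^{ε_1} g_1 v^{ε_2} g_2 ⋯ v^{ε_k} g_k = 1 in G(Δ), then there exists an index i with 1 ≤ i ≤ k − 1 such that ε_{i+1} = −ε_i and g_i lies in the subgroup of G(Δ) generated by the generators corresponding to link(v). -/

import Mathlib

/-- The set of relators of the right-angled Artin group of a simple graph: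
commutators of generators corresponding to adjacent vertices. -/
def raagRels {V : Type*} (G : SimpleGraph V) : Set (FreeGroup V) :=
  {r | ∃ a b : V, G.Adj a b ∧
    r = FreeGroup.of a * FreeGroup.of b * (FreeGroup.of a)⁻¹ * (FreeGroup.of b)⁻¹}

/-- The right-angled Artin group of a simple graph. -/
abbrev RAAG {V : Type*} (G : SimpleGraph V) : Type _ :=
  PresentedGroup (raagRels G)

/-- The generator of the right-angled Artin group corresponding to a vertex. -/
def raagGen {V : Type*} (G : SimpleGraph V) (v : V) : RAAG G :=
  PresentedGroup.of v


namespace RaagBritton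

open HNNExtension Classical

variable {V : Type*}

lemma raag_comm {Δ : SimpleGraph V} {a b : V} (h : Δ.Adj a b) :
    raagGen Δ a * raagGen Δ b = raagGen Δ b * raagGen Δ a := by
  have h1 : raagGen Δ a * raagGen Δ b * (raagGen Δ a)⁻¹ * (raagGen Δ b)⁻¹ = 1 := by
    have hr : (FreeGroup.of a * FreeGroup.of b * (FreeGroup.of a)⁻¹ * (FreeGroup.of b)⁻¹)
        ∈ Subgroup.normalClosure (raagRels Δ) :=
      Subgroup.subset_normalClosure ⟨a, b, h, rfl⟩
    have h2 : (PresentedGroup.mk (raagRels Δ))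
        (FreeGroup.of a * FreeGroup.of b * (FreeGroup.of a)⁻¹ * (FreeGroup.of b)⁻¹) = 1 :=
      (QuotientGroup.eq_one_iff _).2 hr
    simpa [raagGen, PresentedGroup.of, map_mul, map_inv] using h2
  rw [← mul_inv_eq_one, mul_inv_rev, ← mul_assoc]
  exact h1

variable (Δ : SimpleGraph V) (v : V)

/-- The induced graph on the complement of `v`. -/
abbrev Δ' : SimpleGraph {u : V // u ≠ v} := SimpleGraph.comap Subtype.val Δ

/-- The link subgroup inside the RAAG of the complement graph. -/
def linkSub : Subgroup (RAAG (Δ' Δ v)) :=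
  Subgroup.closure (raagGen (Δ' Δ v) '' {u | Δ.Adj v u.1})

/-- The HNN extension. -/
abbrev E := HNNExtension (RAAG (Δ' Δ v)) (linkSub Δ v) (linkSub Δ v) (MulEquiv.refl _)

/-- Inclusion of the complement RAAG into the full RAAG. -/
def iota : RAAG (Δ' Δ v) →* RAAG Δ :=
  PresentedGroup.toGroup (f := fun u => raagGen Δ u.1) (by
    rintro r ⟨a, b, hab, rfl⟩
    simp only [map_mul, map_inv, FreeGroup.lift_apply_of]
    rw [raag_comm (show Δ.Adj a.1 b.1 from hab)]
    group)

lemma iota_gen (u : {u : V // u ≠ v}) :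
    iota Δ v (raagGen (Δ' Δ v) u) = raagGen Δ u.1 := by
  unfold iota raagGen
  exact PresentedGroup.toGroup.of _

lemma mem_linkSub {u : V} (hu : Δ.Adj v u) (h : u ≠ v) :
    raagGen (Δ' Δ v) ⟨u, h⟩ ∈ linkSub Δ v :=
  Subgroup.subset_closure ⟨⟨u, h⟩, hu, rfl⟩

/-- The images of the generators in the HNN extension. -/
noncomputable def fPhi : V → E Δ v := fun u =>
  if h : u = v then t else of (raagGen (Δ' Δ v) ⟨u, h⟩)

/-- The map from the full RAAG to the HNN extension. -/
noncomputable def phi : RAAG Δ →* E Δ v :=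
  PresentedGroup.toGroup (f := fPhi Δ v) (by
    rintro r ⟨a, b, hab, rfl⟩
    simp only [map_mul, map_inv, FreeGroup.lift_apply_of]
    have key : fPhi Δ v a * fPhi Δ v b = fPhi Δ v b * fPhi Δ v a := by
      unfold fPhi
      rcases eq_or_ne a v with hav | ha
      · rw [hav] at hab ⊢
        rcases eq_or_ne b v with hbv | hb
        · rw [hbv] at hab
          exact (Δ.loopless.irrefl _ hab).elim
        · rw [dif_pos rfl, dif_neg hb]
          have := t_mul_of (φ := MulEquiv.refl (linkSub Δ v))
            ⟨_, mem_linkSub Δ v hab hb⟩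
          simpa using this
      · rcases eq_or_ne b v with hbv | hb
        · rw [hbv] at hab ⊢
          rw [dif_neg ha, dif_pos rfl]
          have := t_mul_of (φ := MulEquiv.refl (linkSub Δ v))
            ⟨_, mem_linkSub Δ v hab.symm ha⟩
          simpa using this.symm
        · rw [dif_neg ha, dif_neg hb, ← map_mul, ← map_mul,
            raag_comm (show (Δ' Δ v).Adj ⟨a, ha⟩ ⟨b, hb⟩ from hab)]
    rw [key]
    group)

lemma phi_gen (u : V) : phi Δ v (raagGen Δ u) = fPhi Δ v u := by
  unfold phi raagGen
  simp

lemma phi_gen_v : phi Δ v (raagGen Δ v) = t := by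
  rw [phi_gen]; unfold fPhi; rw [dif_pos rfl]

lemma phi_gen_ne {u : V} (h : u ≠ v) :
    phi Δ v (raagGen Δ u) = of (raagGen (Δ' Δ v) ⟨u, h⟩) := by
  rw [phi_gen]; unfold fPhi; rw [dif_neg h]

/-- The map back from the HNN extension. -/
noncomputable def psi : E Δ v →* RAAG Δ :=
  HNNExtension.lift (iota Δ v) (raagGen Δ v) (by
    intro a
    have ha : (iota Δ v) a ∈ Subgroup.centralizer {raagGen Δ v} := by
      have hle : linkSub Δ v ≤
          Subgroup.comap (iota Δ v) (Subgroup.centralizer {raagGen Δ v}) := by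
        rw [linkSub, Subgroup.closure_le]
        rintro x ⟨u, hu, rfl⟩
        simp only [Set.mem_preimage, SetLike.mem_coe, Subgroup.mem_comap]
        rw [Subgroup.mem_centralizer_iff]
        rintro y hy
        rw [Set.mem_singleton_iff] at hy
        subst hy
        rw [iota_gen]
        exact raag_comm (show Δ.Adj v u.1 from hu)
      exact hle a.2
    rw [Subgroup.mem_centralizer_iff] at ha
    have := ha (raagGen Δ v) rfl
    simpa using this)

lemma psi_phi (x : RAAG Δ) : psi Δ v (phi Δ v x) = x := by
  have hcomp : (psi Δ v).comp (phi Δ v) = MonoidHom.id _ := by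
    ext u
    simp only [MonoidHom.comp_apply, MonoidHom.id_apply]
    show psi Δ v (phi Δ v (raagGen Δ u)) = raagGen Δ u
    rcases eq_or_ne u v with rfl | hu
    · rw [phi_gen_v]
      simp [psi]
    · rw [phi_gen_ne Δ v hu]
      simp [psi, iota_gen]
  exact DFunLike.congr_fun hcomp x

lemma phi_mem_range {x : RAAG Δ}
    (hx : x ∈ Subgroup.closure (raagGen Δ '' {u : V | u ≠ v})) :
    phi Δ v x ∈ (of : RAAG (Δ' Δ v) →* E Δ v).range := by
  have hle : Subgroup.closure (raagGen Δ '' {u : V | u ≠ v}) ≤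
      Subgroup.comap (phi Δ v) (of : RAAG (Δ' Δ v) →* E Δ v).range := by
    rw [Subgroup.closure_le]
    rintro x ⟨u, hu, rfl⟩
    simp only [Set.mem_preimage, SetLike.mem_coe, Subgroup.mem_comap]
    rw [phi_gen_ne Δ v hu]
    exact ⟨_, rfl⟩
  exact hle hx

lemma iota_mem_link {x : RAAG (Δ' Δ v)} (hx : x ∈ linkSub Δ v) :
    iota Δ v x ∈ Subgroup.closure (raagGen Δ '' {u : V | Δ.Adj v u}) := by
  have hle : linkSub Δ v ≤ Subgroup.comap (iota Δ v)
      (Subgroup.closure (raagGen Δ '' {u : V | Δ.Adj v u})) := by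
    rw [linkSub, Subgroup.closure_le]
    rintro x ⟨u, hu, rfl⟩
    simp only [Set.mem_preimage, SetLike.mem_coe, Subgroup.mem_comap]
    rw [iota_gen]
    exact Subgroup.subset_closure ⟨u.1, hu, rfl⟩
  exact hle hx

end RaagBritton

/-- Britton's lemma for the HNN structure of `G(Δ)` over the vertex `v`:
if `g 0 * v^(ε 1) * g 1 * ⋯ * v^(ε k) * g k = 1`, with each `g i` in the subgroup
generated by the generators corresponding to `V ∖ {v}`, then some `g (i+1)` lying
between `v^(ε i)` and `v^(ε (i+1))` with `ε (i+1) = -ε i` belongs to the subgroup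
generated by the generators corresponding to the link of `v`. -/
theorem raag_britton {V : Type*} [Fintype V] (Δ : SimpleGraph V) (v : V)
    (k : ℕ) (hk : 1 ≤ k) (ε : Fin k → ℤ) (hε : ∀ i : Fin k, ε i = 1 ∨ ε i = -1)
    (g : Fin (k + 1) → RAAG Δ)
    (hg : ∀ i : Fin (k + 1), g i ∈ Subgroup.closure (raagGen Δ '' {u : V | u ≠ v}))
    (hprod : g 0 * (List.ofFn fun i : Fin k =>
        (raagGen Δ v) ^ (ε i) * g i.succ).prod = 1) :
    ∃ (i : ℕ) (hi : i + 1 < k),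
      ε ⟨i + 1, hi⟩ = - ε ⟨i, by omega⟩ ∧
      g ⟨i + 1, by omega⟩ ∈ Subgroup.closure (raagGen Δ '' {u : V | Δ.Adj v u}) := by
  classical
  by_contra hcon
  push_neg at hcon
  choose h hh using fun i : Fin (k + 1) =>
    MonoidHom.mem_range.1 (RaagBritton.phi_mem_range Δ v (hg i))
  have g_eq : ∀ i, g i = RaagBritton.iota Δ v (h i) := by
    intro i
    have h1 : RaagBritton.psi Δ v (HNNExtension.of (h i)) = g i := by
      rw [hh i, RaagBritton.psi_phi]
    simpa [RaagBritton.psi] using h1.symm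
  set e : Fin k → ℤˣ := fun i => if ε i = 1 then 1 else -1 with he_def
  have he : ∀ i, ((e i : ℤˣ) : ℤ) = ε i := by
    intro i
    rcases hε i with h1 | h1 <;> simp [he_def, h1]
  have hene : ∀ (i j : Fin k), e i ≠ e j → ε j = -ε i := by
    intro i j hne
    rcases hε i with h1 | h1 <;> rcases hε j with h2 | h2 <;>
      simp [he_def, h1, h2] at hne ⊢
  have tosub : ∀ u : ℤˣ, HNNExtension.toSubgroup (RaagBritton.linkSub Δ v)
      (RaagBritton.linkSub Δ v) u = RaagBritton.linkSub Δ v := by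
    intro u
    rcases Int.units_eq_one_or u with rfl | rfl <;> simp
  have hchain : (List.ofFn fun i : Fin k => (e i, h i.succ)).Chain'
      (fun a b => a.2 ∈ HNNExtension.toSubgroup (RaagBritton.linkSub Δ v)
        (RaagBritton.linkSub Δ v) a.1 → a.1 = b.1) := by
    show List.IsChain _ _
    rw [List.isChain_iff_getElem]
    intro i hi
    simp only [List.length_ofFn] at hi
    simp only [List.getElem_ofFn, Fin.cast_mk]
    intro hmem
    by_contra hne
    rw [tosub] at hmem
    have hεeq : ε ⟨i + 1, by omega⟩ = -ε ⟨i, by omega⟩ := hene _ _ hne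
    exact hcon i (by omega) hεeq (by
      rw [g_eq]
      exact RaagBritton.iota_mem_link Δ v hmem)
  have hlist : (List.ofFn fun i : Fin k => (e i, h i.succ)).map
      (fun x : ℤˣ × RAAG (RaagBritton.Δ' Δ v) =>
        (HNNExtension.t ^ (x.1 : ℤ) * HNNExtension.of x.2 : RaagBritton.E Δ v))
      = (List.ofFn fun i : Fin k => (raagGen Δ v) ^ (ε i) * g i.succ).map
        (RaagBritton.phi Δ v) := by
    rw [List.map_ofFn, List.map_ofFn]
    congr 1
    funext i
    simp only [Function.comp_apply]
    rw [map_mul, map_zpow, RaagBritton.phi_gen_v, ← hh, he]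
  have hprodeq : HNNExtension.NormalWord.ReducedWord.prod
      (MulEquiv.refl ↥(RaagBritton.linkSub Δ v))
      (⟨h 0, List.ofFn fun i : Fin k => (e i, h i.succ), hchain⟩ :
        HNNExtension.NormalWord.ReducedWord (RAAG (RaagBritton.Δ' Δ v))
          (RaagBritton.linkSub Δ v) (RaagBritton.linkSub Δ v)) = 1 := by
    unfold HNNExtension.NormalWord.ReducedWord.prod
    dsimp only
    rw [hlist, ← map_list_prod, hh 0, ← map_mul, hprod, map_one]
  have hnil := HNNExtension.ReducedWord.toList_eq_nil_of_mem_of_range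
    (MulEquiv.refl ↥(RaagBritton.linkSub Δ v))
    (⟨h 0, List.ofFn fun i : Fin k => (e i, h i.succ), hchain⟩ :
      HNNExtension.NormalWord.ReducedWord (RAAG (RaagBritton.Δ' Δ v))
        (RaagBritton.linkSub Δ v) (RaagBritton.linkSub Δ v))
    (by rw [hprodeq]; exact one_mem _)
  have hlen := congrArg List.length hnil
  simp only [List.length_ofFn, List.length_nil] at hlen
  omega
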